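/- Let p = Σ_{S ⊆ {1,…,n}, |S| = d} c_S·∏_{i∈S} x_i be a multiaffine d-homogeneous polynomial with nonnegative coefficients, d ≥ 2, that is strongly log-concave at 𝟙. Then for every subset τ ⊆ {1,…,n} with |τ| ≤ d−2, the symmetric matrix A_τ, indexed by pairs i,j ∉ τ, with entries A_τ(i,j) = (∂_i ∂_j ∂_τ p)(𝟙) for i ≠ j and A_τ(i,i) = 0 (where ∂_τ = ∏_{i∈τ} ∂_i), has at most one strictly positive eigenvalue counted with multiplicity. Consequently the weighted simplicial complex X^p, whose maximal faces are the sets S with c_S > 0 weighted by w(S) = c_S, is a 0-local spectral expander. -/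

import Mathlib

open MvPolynomial Matrix Finset
open scoped Classical

noncomputable section

abbrev MP (n : ℕ) := MvPolynomial (Fin n) ℝ

/-- Iterated partial derivative along a list of indices. -/
def derivList {n : ℕ} (l : List (Fin n)) (q : MP n) : MP n :=
  l.foldr (fun i r => pderiv i r) q

/-- Gradient at the all-ones point. -/
def gradOne {n : ℕ} (q : MP n) : Fin n → ℝ := fun i => eval (fun _ => (1:ℝ)) (pderiv i q)

/-- Hessian at the all-ones point. -/
def hessOne {n : ℕ} (q : MP n) : Matrix (Fin n) (Fin n) ℝ :=
  Matrix.of fun i j => eval (fun _ => (1:ℝ)) (pderiv i (pderiv j q))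

/-- `q` is log-concave at the all-ones point: `q(𝟙)·∇²q(𝟙) − ∇q(𝟙)∇q(𝟙)ᵀ` is NSD,
equivalently its negation is PSD. -/
def LogConcaveAtOne {n : ℕ} (q : MP n) : Prop :=
  (vecMulVec (gradOne q) (gradOne q) - eval (fun _ => (1:ℝ)) q • hessOne q).PosSemidef

/-- `q` is strongly log-concave at the all-ones point. -/
def StronglyLogConcaveAtOne {n : ℕ} (q : MP n) : Prop :=
  ∀ l : List (Fin n), LogConcaveAtOne (derivList l q)

/-- Iterated partial derivative `∂_τ` with respect to all variables indexed by `τ`. -/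
def derivSet {n : ℕ} (τ : Finset (Fin n)) (q : MP n) : MP n :=
  derivList τ.toList q

/-- The simplicial complex `X^p` of subsets of supports of monomials of `p`,
given the coefficient function `c`. -/
def Xp (n : ℕ) (c : Finset (Fin n) → ℝ) : Finset (Finset (Fin n)) :=
  Finset.univ.filter (fun τ : Finset (Fin n) => ∃ S, c S ≠ 0 ∧ τ ⊆ S)

/-- The (zero-padded) weighted adjacency matrix of the 1-skeleton of the link `X_τ`. -/
def linkMat (n : ℕ) (X : Finset (Finset (Fin n))) (w : Finset (Fin n) → ℝ)
    (τ : Finset (Fin n)) : Matrix (Fin n) (Fin n) ℝ :=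
  Matrix.of fun i j =>
    if i ≠ j ∧ i ∉ τ ∧ j ∉ τ ∧ insert i (insert j τ) ∈ X then w (insert i (insert j τ)) else 0

lemma my_pderiv_comm {n : ℕ} (i j : Fin n) (q : MP n) :
    pderiv i (pderiv j q) = pderiv j (pderiv i q) := by
  induction q using MvPolynomial.induction_on' with
  | monomial s a =>
    rcases eq_or_ne i j with rfl | hij
    · rfl
    · simp only [pderiv_monomial]
      have h1 : ((s - Finsupp.single j 1 : Fin n →₀ ℕ)) i = s i := by
        simp [Finsupp.tsub_apply, Finsupp.single_apply_eq_zero, hij.symm]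
      have h2 : ((s - Finsupp.single i 1 : Fin n →₀ ℕ)) j = s j := by
        simp [Finsupp.tsub_apply, Finsupp.single_apply_eq_zero, hij]
      rw [h1, h2, tsub_right_comm]
      ring_nf
  | add p q hp hq => simp [hp, hq]


lemma derivList_cons {n : ℕ} (i : Fin n) (l : List (Fin n)) (q : MP n) :
    derivList (i :: l) q = pderiv i (derivList l q) := rfl

lemma pderiv_derivList {n : ℕ} (i : Fin n) (l : List (Fin n)) (q : MP n) :
    pderiv i (derivList l q) = derivList l (pderiv i q) := by
  induction l with
  | nil => rfl
  | cons j l ih => rw [derivList_cons, my_pderiv_comm, ih, derivList_cons]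

lemma derivList_perm {n : ℕ} {l l' : List (Fin n)} (h : l.Perm l') (q : MP n) :
    derivList l q = derivList l' q := by
  induction h with
  | nil => rfl
  | cons x _ ih => simp [derivList_cons, ih]
  | swap x y l => simp [derivList_cons, my_pderiv_comm]
  | trans _ _ ih1 ih2 => rw [ih1, ih2]


lemma derivSet_empty {n : ℕ} (q : MP n) : derivSet (∅ : Finset (Fin n)) q = q := by
  simp [derivSet, derivList]

lemma derivSet_insert {n : ℕ} {a : Fin n} {τ : Finset (Fin n)} (ha : a ∉ τ) (q : MP n) :
    derivSet (insert a τ) q = pderiv a (derivSet τ q) := by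
  rw [derivSet, derivList_perm (Finset.toList_insert ha) q, derivList_cons]; rfl

lemma derivList_sum {n : ℕ} {α : Type*} (l : List (Fin n)) (s : Finset α) (f : α → MP n) :
    derivList l (∑ a ∈ s, f a) = ∑ a ∈ s, derivList l (f a) := by
  induction l with
  | nil => rfl
  | cons j l ih => rw [derivList_cons, ih, map_sum]; rfl

lemma derivList_C_mul {n : ℕ} (l : List (Fin n)) (a : ℝ) (q : MP n) :
    derivList l (C a * q) = C a * derivList l q := by
  induction l with
  | nil => rfl
  | cons j l ih => rw [derivList_cons, ih, pderiv_C_mul]; rfl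

lemma pderiv_prod_X {n : ℕ} (a : Fin n) (U : Finset (Fin n)) :
    pderiv a (∏ k ∈ U, (X k : MP n)) =
      if a ∈ U then ∏ k ∈ U.erase a, (X k : MP n) else 0 := by
  induction U using Finset.induction with
  | empty => simp
  | @insert b U hb ih =>
    rw [Finset.prod_insert hb, pderiv_mul, ih]
    rcases eq_or_ne a b with rfl | hab
    · simp [hb, pderiv_X_self, Finset.erase_insert hb]
    · simp only [pderiv_X_of_ne hab.symm, zero_mul, zero_add]
      by_cases haU : a ∈ U
      · rw [if_pos haU, if_pos (Finset.mem_insert_of_mem haU),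
          Finset.erase_insert_of_ne hab.symm] -- maybe wrong name
        rw [Finset.prod_insert (by simp [hb, Finset.mem_erase])]
      · simp [haU, hab]

lemma derivSet_prod_X {n : ℕ} (τ T : Finset (Fin n)) :
    derivSet τ (∏ k ∈ T, (X k : MP n)) =
      if τ ⊆ T then ∏ k ∈ T \ τ, (X k : MP n) else 0 := by
  induction τ using Finset.induction with
  | empty => simp [derivSet_empty]
  | @insert a τ ha ih =>
    rw [derivSet_insert ha, ih]
    by_cases hτ : τ ⊆ T
    · rw [if_pos hτ, pderiv_prod_X]
      by_cases haT : a ∈ T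
      · have h1 : insert a τ ⊆ T := Finset.insert_subset haT hτ
        rw [if_pos (by simp [haT, ha, Finset.mem_sdiff]), if_pos h1,
          show ((T \ τ).erase a) = T \ insert a τ by
            ext x; simp only [Finset.mem_erase, Finset.mem_sdiff, Finset.mem_insert]; tauto]
      · rw [if_neg (by simp [haT, Finset.mem_sdiff]),
          if_neg (fun h => haT (h (Finset.mem_insert_self a τ)))]
    · rw [if_neg hτ, if_neg (fun h => hτ (Finset.subset_insert a τ |>.trans h)), map_zero]

lemma key_eig {n : ℕ} {A : Matrix (Fin n) (Fin n) ℝ} (hA : A.IsHermitian)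
    (g : Fin n → ℝ) (h : ∀ x : Fin n → ℝ, g ⬝ᵥ x = 0 → x ⬝ᵥ (A *ᵥ x) ≤ 0) :
    (Finset.univ.filter fun i => 0 < hA.eigenvalues i).card ≤ 1 := by
  by_contra hc
  obtain ⟨i, hi, j, hj, hij⟩ := Finset.one_lt_card.mp (lt_of_not_ge hc)
  rw [Finset.mem_filter] at hi hj
  have hli : 0 < hA.eigenvalues i := hi.2
  have hlj : 0 < hA.eigenvalues j := hj.2
  set u : Fin n → ℝ := ⇑(hA.eigenvectorBasis i) with hu
  set v : Fin n → ℝ := ⇑(hA.eigenvectorBasis j) with hv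
  have Au : A *ᵥ u = hA.eigenvalues i • u := hA.mulVec_eigenvectorBasis i
  have Av : A *ᵥ v = hA.eigenvalues j • v := hA.mulVec_eigenvectorBasis j
  have horth := hA.eigenvectorBasis.orthonormal
  have hdot : ∀ k l : Fin n, (hA.eigenvectorBasis k : Fin n → ℝ) ⬝ᵥ (hA.eigenvectorBasis l)
      = if k = l then 1 else 0 := by
    intro k l
    have := orthonormal_iff_ite.mp horth k l
    rw [← this, PiLp.inner_apply]
    simp [dotProduct, mul_comm]
  have huu : u ⬝ᵥ u = 1 := by simpa using hdot i i
  have hvv : v ⬝ᵥ v = 1 := by simpa using hdot j j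
  have huv : u ⬝ᵥ v = 0 := by simpa [hij] using hdot i j
  have hvu : v ⬝ᵥ u = 0 := by simpa [hij.symm] using hdot j i
  by_cases hgu : g ⬝ᵥ u = 0
  · have := h u hgu
    rw [Au, dotProduct_smul, smul_eq_mul, huu] at this
    linarith
  · set a : ℝ := g ⬝ᵥ v
    set b : ℝ := g ⬝ᵥ u
    have hx : g ⬝ᵥ (a • u - b • v) = 0 := by
      rw [dotProduct_sub, dotProduct_smul, dotProduct_smul]
      simp only [smul_eq_mul, a, b]; ring
    have := h _ hx
    rw [Matrix.mulVec_sub, Matrix.mulVec_smul, Matrix.mulVec_smul, Au, Av] at this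
    simp only [sub_dotProduct, dotProduct_sub, smul_dotProduct,
      dotProduct_smul, smul_eq_mul, huu, hvv, huv, hvu] at this
    have hb2 : 0 < b ^ 2 := by positivity
    nlinarith [sq_nonneg a, sq_nonneg b]

lemma derivList_zero {n : ℕ} (l : List (Fin n)) : derivList l (0 : MP n) = 0 := by
  induction l with
  | nil => rfl
  | cons j l ih => rw [derivList_cons, ih, map_zero]





section Main
variable {n d : ℕ} {c : Finset (Fin n) → ℝ} {p : MP n}

lemma derivSet_p (hp : p = ∑ S : Finset (Fin n), C (c S) * ∏ i ∈ S, X i)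
    (τ : Finset (Fin n)) :
    derivSet τ p = ∑ S : Finset (Fin n),
      C (c S) * (if τ ⊆ S then ∏ k ∈ S \ τ, X k else 0) := by
  subst hp
  rw [derivSet, derivList_sum]
  refine Finset.sum_congr rfl fun S _ => ?_
  rw [derivList_C_mul, ← derivSet, derivSet_prod_X]

lemma eval1_derivSet (hp : p = ∑ S : Finset (Fin n), C (c S) * ∏ i ∈ S, X i)
    (τ : Finset (Fin n)) :
    eval (fun _ => (1:ℝ)) (derivSet τ p) =
      ∑ S : Finset (Fin n), (if τ ⊆ S then c S else 0) := by
  rw [derivSet_p hp τ, map_sum]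
  refine Finset.sum_congr rfl fun S _ => ?_
  by_cases h : τ ⊆ S <;> simp [h]

lemma double_pderiv_p (hp : p = ∑ S : Finset (Fin n), C (c S) * ∏ i ∈ S, X i)
    (i : Fin n) : pderiv i (pderiv i p) = 0 := by
  subst hp
  rw [map_sum, map_sum]
  refine Finset.sum_eq_zero fun S _ => ?_
  rw [pderiv_C_mul, pderiv_C_mul, pderiv_prod_X]
  by_cases h : i ∈ S
  · rw [if_pos h, pderiv_prod_X, if_neg (by simp), mul_zero]
  · simp [h]

lemma double_pderiv_derivSet (hp : p = ∑ S : Finset (Fin n), C (c S) * ∏ i ∈ S, X i)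
    (τ : Finset (Fin n)) (i : Fin n) :
    pderiv i (pderiv i (derivSet τ p)) = 0 := by
  rw [derivSet, pderiv_derivList, pderiv_derivList, double_pderiv_p hp, derivList_zero]

lemma pderiv_derivSet_mem (hp : p = ∑ S : Finset (Fin n), C (c S) * ∏ i ∈ S, X i)
    {τ : Finset (Fin n)} {i : Fin n} (hi : i ∈ τ) :
    pderiv i (derivSet τ p) = 0 := by
  have h1 : derivSet τ p = pderiv i (derivSet (τ.erase i) p) := by
    rw [← derivSet_insert (Finset.notMem_erase i τ), Finset.insert_erase hi]
  rw [h1, double_pderiv_derivSet hp]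

/-- The key entry formula for the zero-padded Hessian matrix. -/
lemma matrix_entry (hp : p = ∑ S : Finset (Fin n), C (c S) * ∏ i ∈ S, X i)
    (τ : Finset (Fin n)) (i j : Fin n) :
    (if i ≠ j ∧ i ∉ τ ∧ j ∉ τ then
        eval (fun _ => (1:ℝ)) (pderiv i (pderiv j (derivSet τ p)))
      else (0:ℝ)) =
      ∑ S : Finset (Fin n),
        (if i ≠ j ∧ i ∉ τ ∧ j ∉ τ ∧ insert i (insert j τ) ⊆ S then c S else 0) := by
  by_cases h : i ≠ j ∧ i ∉ τ ∧ j ∉ τ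
  · rw [if_pos h]
    have hiins : i ∉ insert j τ := by simp [h.1, h.2.1]
    rw [← derivSet_insert h.2.2, ← derivSet_insert hiins, eval1_derivSet hp]
    refine Finset.sum_congr rfl fun S _ => ?_
    by_cases hs : insert i (insert j τ) ⊆ S
    · rw [if_pos hs, if_pos ⟨h.1, h.2.1, h.2.2, hs⟩]
    · rw [if_neg hs, if_neg (by tauto)]
  · rw [if_neg h, eq_comm]
    refine Finset.sum_eq_zero fun S _ => ?_
    rw [if_neg (by tauto)]

/-- The quadratic form of the zero-padded Hessian is ≤ 0 on the orthogonal
complement of some vector `g`. -/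
lemma quad_cond (hp : p = ∑ S : Finset (Fin n), C (c S) * ∏ i ∈ S, X i)
    (hnn : ∀ S, 0 ≤ c S) (hslc : StronglyLogConcaveAtOne p)
    (τ : Finset (Fin n)) :
    ∃ g : Fin n → ℝ, ∀ x : Fin n → ℝ, g ⬝ᵥ x = 0 →
      x ⬝ᵥ ((Matrix.of fun i j =>
        if i ≠ j ∧ i ∉ τ ∧ j ∉ τ then
          eval (fun _ => (1:ℝ)) (pderiv i (pderiv j (derivSet τ p)))
        else (0:ℝ)) *ᵥ x) ≤ 0 := by
  have hAH : (Matrix.of fun i j =>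
      if i ≠ j ∧ i ∉ τ ∧ j ∉ τ then
        eval (fun _ => (1:ℝ)) (pderiv i (pderiv j (derivSet τ p)))
      else (0:ℝ)) = hessOne (derivSet τ p) := by
    ext i j
    simp only [Matrix.of_apply, hessOne]
    by_cases h : i ≠ j ∧ i ∉ τ ∧ j ∉ τ
    · rw [if_pos h]
    · rw [if_neg h, eq_comm]
      by_cases hij : i = j
      · subst hij; rw [double_pderiv_derivSet hp, map_zero]
      · rcases (by tauto : i ∈ τ ∨ j ∈ τ) with hi | hj
        · rw [my_pderiv_comm, pderiv_derivSet_mem hp hi, map_zero, map_zero]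
        · rw [pderiv_derivSet_mem hp hj, map_zero, map_zero]
  set e : ℝ := eval (fun _ => (1:ℝ)) (derivSet τ p) with he
  have hennd : 0 ≤ e := by
    rw [he, eval1_derivSet hp]
    exact Finset.sum_nonneg fun S _ => by by_cases h : τ ⊆ S <;> simp [h, hnn S]
  rcases eq_or_lt_of_le hennd with he0 | hepos
  · -- e = 0 : the matrix is zero
    have hsum : ∑ S : Finset (Fin n), (if τ ⊆ S then c S else 0) = 0 := by
      rw [← eval1_derivSet hp, ← he]; exact he0.symm
    have hc0 : ∀ S : Finset (Fin n), τ ⊆ S → c S = 0 := by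
      have := (Finset.sum_eq_zero_iff_of_nonneg
        (fun S _ => by by_cases h : τ ⊆ S <;> simp [h, hnn S])).mp hsum
      intro S hS
      simpa [hS] using this S (Finset.mem_univ S)
    have hA0 : (Matrix.of fun i j =>
        if i ≠ j ∧ i ∉ τ ∧ j ∉ τ then
          eval (fun _ => (1:ℝ)) (pderiv i (pderiv j (derivSet τ p)))
        else (0:ℝ)) = 0 := by
      ext i j
      rw [Matrix.of_apply, matrix_entry hp]
      refine Finset.sum_eq_zero fun S _ => ?_
      by_cases h : i ≠ j ∧ i ∉ τ ∧ j ∉ τ ∧ insert i (insert j τ) ⊆ S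
      · rw [if_pos h, hc0 S (le_trans (le_trans (Finset.subset_insert _ _)
          (Finset.subset_insert _ _)) h.2.2.2)]
      · rw [if_neg h]
    exact ⟨0, fun x _ => by rw [hA0]; simp⟩
  · -- e > 0
    refine ⟨gradOne (derivSet τ p), fun x hx => ?_⟩
    have hlc : LogConcaveAtOne (derivSet τ p) := hslc τ.toList
    have hpsd := hlc.dotProduct_mulVec_nonneg x
    rw [star_trivial] at hpsd
    rw [Matrix.sub_mulVec, Matrix.smul_mulVec, dotProduct_sub,
      dotProduct_smul] at hpsd
    have hvv : x ⬝ᵥ ((vecMulVec (gradOne (derivSet τ p)) (gradOne (derivSet τ p))) *ᵥ x)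
        = (gradOne (derivSet τ p) ⬝ᵥ x) * (gradOne (derivSet τ p) ⬝ᵥ x) := by
      simp only [dotProduct, Matrix.mulVec, Matrix.vecMulVec_apply,
        Finset.mul_sum, Finset.sum_mul, ← Finset.sum_product']
      refine Finset.sum_congr rfl fun ij _ => by ring
    rw [hvv, hx, mul_zero, ← he] at hpsd
    have hH : x ⬝ᵥ (hessOne (derivSet τ p) *ᵥ x) ≤ 0 := by
      have := hpsd
      simp only [smul_eq_mul] at this
      nlinarith
    rw [hAH]
    exact hH

end Main


section W
variable {n d : ℕ} {c : Finset (Fin n) → ℝ}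

lemma weight_formula (hdeg : ∀ S, c S ≠ 0 → S.card = d) (w : Finset (Fin n) → ℝ)
    (hw1 : ∀ S ∈ Xp n c, S.card = d → w S = c S)
    (hw2 : ∀ τ ∈ Xp n c, τ.card < d →
      w τ = ∑ σ ∈ (Xp n c).filter (fun σ => τ ⊆ σ ∧ σ.card = τ.card + 1), w σ) :
    ∀ m : ℕ, ∀ σ ∈ Xp n c, σ.card + m = d →
      w σ = ((Nat.factorial m : ℕ) : ℝ) * ∑ S : Finset (Fin n), (if σ ⊆ S then c S else 0) := by
  intro m
  induction m with
  | zero =>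
    intro σ hσ hcard
    rw [Nat.add_zero] at hcard
    rw [hw1 σ hσ hcard, Nat.factorial_zero, Nat.cast_one, one_mul,
      Finset.sum_eq_single σ]
    · simp
    · intro S _ hne
      by_cases hsub : σ ⊆ S
      · rw [if_pos hsub]
        by_contra hcs
        exact hne ((Finset.eq_of_subset_of_card_le hsub
          (by rw [hdeg S hcs, hcard])).symm)
      · rw [if_neg hsub]
    · intro h; exact absurd (Finset.mem_univ σ) h
  | succ m ih =>
    intro σ hσ hcard
    have hlt : σ.card < d := by omega
    rw [hw2 σ hσ hlt]
    have hterm : ∀ σ' ∈ (Xp n c).filter (fun σ' => σ ⊆ σ' ∧ σ'.card = σ.card + 1),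
        w σ' = ((Nat.factorial m : ℕ) : ℝ) * ∑ S : Finset (Fin n), (if σ' ⊆ S then c S else 0) := by
      intro σ' hσ'
      rw [Finset.mem_filter] at hσ'
      exact ih σ' hσ'.1 (by rw [hσ'.2.2]; omega)
    rw [Finset.sum_congr rfl hterm, ← Finset.mul_sum, Finset.sum_comm]
    have hinner : ∀ S : Finset (Fin n),
        (∑ σ' ∈ (Xp n c).filter (fun σ' => σ ⊆ σ' ∧ σ'.card = σ.card + 1),
          (if σ' ⊆ S then c S else 0)) = (m + 1 : ℝ) * (if σ ⊆ S then c S else 0) := by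
      intro S
      by_cases hcs : c S = 0
      · rw [Finset.sum_eq_zero fun σ' _ => by by_cases h : σ' ⊆ S <;> simp [h, hcs]]
        by_cases h : σ ⊆ S <;> simp [h, hcs]
      · have hcardS : S.card = d := hdeg S hcs
        by_cases hsub : σ ⊆ S
        · rw [if_pos hsub, Finset.sum_ite, Finset.sum_const_zero, add_zero,
            Finset.sum_const, nsmul_eq_mul]
          have hGeq : ((Xp n c).filter (fun σ' => σ ⊆ σ' ∧ σ'.card = σ.card + 1)).filter
              (fun σ' => σ' ⊆ S) = (S \ σ).image (fun x => insert x σ) := by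
            ext σ'
            simp only [Finset.mem_filter, Finset.mem_image, Finset.mem_sdiff, Xp,
              Finset.mem_univ, true_and]
            constructor
            · rintro ⟨⟨_, hss, hcard'⟩, hsubS⟩
              have h1 : (σ' \ σ).card = 1 := by
                rw [Finset.card_sdiff_of_subset hss, hcard']; omega
              obtain ⟨x, hx⟩ := Finset.card_eq_one.mp h1
              refine ⟨x, ?_, ?_⟩
              · have hxmem : x ∈ σ' \ σ := hx ▸ Finset.mem_singleton_self x
                rw [Finset.mem_sdiff] at hxmem
                exact ⟨hsubS hxmem.1, hxmem.2⟩
              · have := Finset.sdiff_union_of_subset hss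
                rw [hx] at this
                rw [← this, Finset.insert_eq]
            · rintro ⟨x, ⟨hxS, hxσ⟩, rfl⟩
              exact ⟨⟨⟨S, hcs, Finset.insert_subset hxS hsub⟩,
                Finset.subset_insert x σ, Finset.card_insert_of_notMem hxσ⟩,
                Finset.insert_subset hxS hsub⟩
          rw [hGeq, Finset.card_image_of_injOn, Finset.card_sdiff_of_subset hsub, hcardS]
          · have : d - σ.card = m + 1 := by omega
            rw [this]; push_cast; ring
          · intro x hx y hy hxy
            simp only [Finset.coe_sdiff, Set.mem_diff, Finset.mem_coe] at hx hy
            simp only at hxy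
            have : x ∈ insert y σ := hxy ▸ Finset.mem_insert_self x σ
            rcases Finset.mem_insert.mp this with h | h
            · exact h
            · exact absurd h hx.2
        · rw [if_neg hsub, mul_zero]
          refine Finset.sum_eq_zero fun σ' hσ' => ?_
          rw [Finset.mem_filter] at hσ'
          rw [if_neg fun h => hsub (hσ'.2.1.trans h)]
    rw [Finset.sum_congr rfl fun S _ => hinner S, ← Finset.mul_sum, ← mul_assoc,
      Nat.factorial_succ]
    push_cast
    ring

end W


theorem stmt5 (n d : ℕ) (hd : 2 ≤ d) (c : Finset (Fin n) → ℝ)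
    (hnn : ∀ S, 0 ≤ c S) (hdeg : ∀ S, c S ≠ 0 → S.card = d)
    (p : MP n) (hp : p = ∑ S : Finset (Fin n), C (c S) * ∏ i ∈ S, X i)
    (hslc : StronglyLogConcaveAtOne p) :
    -- the Hessian of `∂_τ p` at `𝟙` (with zero diagonal, indexed by pairs `i,j ∉ τ`,
    -- zero-padded elsewhere) has at most one strictly positive eigenvalue
    (∀ τ : Finset (Fin n), τ.card ≤ d - 2 →
      ∀ hA : (Matrix.of fun i j =>
          if i ≠ j ∧ i ∉ τ ∧ j ∉ τ then
            eval (fun _ => (1:ℝ)) (pderiv i (pderiv j (derivSet τ p)))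
          else (0:ℝ)).IsHermitian,
        (Finset.univ.filter fun i => 0 < hA.eigenvalues i).card ≤ 1) ∧
    -- consequently, `X^p` with any balanced weighting extending `w(S) = c_S` on the
    -- maximal faces is a 0-local spectral expander
    (∀ w : Finset (Fin n) → ℝ,
      (∀ S ∈ Xp n c, S.card = d → w S = c S) →
      (∀ τ ∈ Xp n c, τ.card < d →
        w τ = ∑ σ ∈ (Xp n c).filter (fun σ => τ ⊆ σ ∧ σ.card = τ.card + 1), w σ) →
      ∀ τ ∈ Xp n c, τ.card ≤ d - 2 →
        ∀ hA : (linkMat n (Xp n c) w τ).IsHermitian,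
          (Finset.univ.filter fun i => 0 < hA.eigenvalues i).card ≤ 1) := by
  constructor
  · intro τ _ hA
    obtain ⟨g, hg⟩ := quad_cond hp hnn hslc τ
    exact key_eig hA g hg
  · intro w hw1 hw2 τ _ hτcard hA
    obtain ⟨g, hg⟩ := quad_cond hp hnn hslc τ
    have hL : linkMat n (Xp n c) w τ =
        ((Nat.factorial (d - (τ.card + 2)) : ℕ) : ℝ) • (Matrix.of fun i j =>
          if i ≠ j ∧ i ∉ τ ∧ j ∉ τ then
            eval (fun _ => (1:ℝ)) (pderiv i (pderiv j (derivSet τ p)))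
          else (0:ℝ)) := by
      ext i j
      rw [Matrix.smul_apply, Matrix.of_apply, matrix_entry hp, linkMat, Matrix.of_apply]
      by_cases h : i ≠ j ∧ i ∉ τ ∧ j ∉ τ
      · have hcardσ : (insert i (insert j τ)).card = τ.card + 2 := by
          rw [Finset.card_insert_of_notMem (by simp [h.1, h.2.1]),
            Finset.card_insert_of_notMem h.2.2]
        by_cases hXp : insert i (insert j τ) ∈ Xp n c
        · rw [if_pos ⟨h.1, h.2.1, h.2.2, hXp⟩]
          rw [weight_formula hdeg w hw1 hw2 (d - (τ.card + 2)) _ hXp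
            (by rw [hcardσ]; omega)]
          rw [smul_eq_mul]
          congr 1
          refine Finset.sum_congr rfl fun S _ => ?_
          by_cases hs : insert i (insert j τ) ⊆ S
          · rw [if_pos hs, if_pos ⟨h.1, h.2.1, h.2.2, hs⟩]
          · rw [if_neg hs, if_neg (by tauto)]
        · rw [if_neg (by tauto)]
          rw [Finset.sum_eq_zero fun S _ => ?_, smul_zero]
          by_cases hs : i ≠ j ∧ i ∉ τ ∧ j ∉ τ ∧ insert i (insert j τ) ⊆ S
          · rw [if_pos hs]
            by_contra hcs
            exact hXp (by
              rw [Xp, Finset.mem_filter]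
              exact ⟨Finset.mem_univ _, S, hcs, hs.2.2.2⟩)
          · rw [if_neg hs]
      · rw [if_neg (by tauto), Finset.sum_eq_zero fun S _ => by rw [if_neg (by tauto)],
          smul_zero]
    apply key_eig hA g
    intro x hx
    rw [hL, Matrix.smul_mulVec, dotProduct_smul, smul_eq_mul]
    exact mul_nonpos_of_nonneg_of_nonpos (by positivity) (hg x hx)

end
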